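/- arXiv:1111.4603 — 3 statements merged into one kernel-verified Lean document; each statement's English description precedes it below -/
import Mathlib

section
/- For every nonzero complex number w with Re(w) ≥ 0, one has |(e^{-w} - 1)/w| ≥ 1 - |w|/2. -/
open intervalIntegral in
lemma exp_sub_one_eq_integral (z : ℂ) :
    Complex.exp z - 1 = ∫ t in (0:ℝ)..1, z * Complex.exp (t * z) := by
  have hderiv : ∀ t ∈ Set.uIcc (0:ℝ) (1:ℝ),
      HasDerivAt (fun t : ℝ => Complex.exp ((t:ℂ) * z)) (z * Complex.exp ((t:ℂ) * z)) t := by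
    intro t _
    have h1 : HasDerivAt (fun t : ℝ => (t:ℂ) * z) z t := by
      simpa using (Complex.ofRealCLM.hasDerivAt (x := t)).mul_const z
    exact ((Complex.hasDerivAt_exp ((t:ℂ) * z)).comp t h1).congr_deriv (mul_comm _ _)
  have hcont : IntervalIntegrable (fun t : ℝ => z * Complex.exp ((t:ℂ) * z))
      MeasureTheory.volume 0 1 := by
    exact (continuous_const.mul (Complex.continuous_exp.comp
      (Complex.continuous_ofReal.mul continuous_const))).intervalIntegrable 0 1
  have := intervalIntegral.integral_eq_sub_of_hasDerivAt hderiv hcont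
  rw [this]
  simp

lemma abs_exp_sub_one_le' (z : ℂ) (hz : z.re ≤ 0) :
    ‖Complex.exp z - 1‖ ≤ ‖z‖ := by
  rw [exp_sub_one_eq_integral z]
  have := intervalIntegral.norm_integral_le_of_norm_le_const
    (C := ‖z‖) (f := fun t : ℝ => z * Complex.exp ((t:ℂ) * z))
    (a := 0) (b := 1) ?_
  · simpa using this
  · intro t ht
    rw [Set.uIoc_of_le (by norm_num)] at ht
    have h1 : ‖Complex.exp ((t:ℂ) * z)‖ ≤ 1 := by
      rw [Complex.norm_exp]
      apply Real.exp_le_one_iff.mpr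
      have : ((t:ℂ) * z).re = t * z.re := by simp
      rw [this]
      exact mul_nonpos_of_nonneg_of_nonpos (le_of_lt ht.1) hz
    calc ‖z * Complex.exp ((t:ℂ) * z)‖
        = ‖z‖ * ‖Complex.exp ((t:ℂ) * z)‖ := by
          exact norm_mul _ _
      _ ≤ ‖z‖ * 1 := by
          exact mul_le_mul_of_nonneg_left h1 (norm_nonneg z)
      _ = ‖z‖ := mul_one _

lemma abs_exp_sub_one_sub_le' (z : ℂ) (hz : z.re ≤ 0) :
    ‖Complex.exp z - 1 - z‖ ≤ ‖z‖ ^ 2 / 2 := by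
  have hcont : IntervalIntegrable (fun t : ℝ => z * Complex.exp ((t:ℂ) * z))
      MeasureTheory.volume 0 1 :=
    (continuous_const.mul (Complex.continuous_exp.comp
      (Complex.continuous_ofReal.mul continuous_const))).intervalIntegrable 0 1
  have hconst : IntervalIntegrable (fun _ : ℝ => z) MeasureTheory.volume 0 1 :=
    intervalIntegrable_const
  have key : Complex.exp z - 1 - z
      = ∫ t in (0:ℝ)..1, (z * Complex.exp ((t:ℂ) * z) - z) := by
    rw [intervalIntegral.integral_sub hcont hconst, ← exp_sub_one_eq_integral z]
    simp
  rw [key]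
  have hbound : ‖∫ t in (0:ℝ)..1, (z * Complex.exp ((t:ℂ) * z) - z)‖
      ≤ |∫ t in (0:ℝ)..1, ‖z‖ ^ 2 * t| := by
    apply intervalIntegral.norm_integral_le_abs_of_norm_le
    · apply MeasureTheory.ae_restrict_of_forall_mem measurableSet_uIoc
      intro t ht
      rw [Set.uIoc_of_le (by norm_num : (0:ℝ) ≤ 1)] at ht
      have htre : ((t:ℂ) * z).re ≤ 0 := by
        have : ((t:ℂ) * z).re = t * z.re := by simp
        rw [this]
        exact mul_nonpos_of_nonneg_of_nonpos (le_of_lt ht.1) hz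
      have h2 : ‖Complex.exp ((t:ℂ) * z) - 1‖ ≤ ‖(t:ℂ) * z‖ :=
        abs_exp_sub_one_le' _ htre
      have h3 : ‖(t:ℂ) * z‖ = t * ‖z‖ := by
        rw [norm_mul, Complex.norm_real, Real.norm_of_nonneg ht.1.le]
      calc ‖z * Complex.exp ((t:ℂ) * z) - z‖
          = ‖z‖ * ‖Complex.exp ((t:ℂ) * z) - 1‖ := by
            rw [show z * Complex.exp ((t:ℂ) * z) - z = z * (Complex.exp ((t:ℂ) * z) - 1) by ring]
            exact norm_mul _ _
        _ ≤ ‖z‖ * (t * ‖z‖) := by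
            rw [← h3]; exact mul_le_mul_of_nonneg_left h2 (norm_nonneg z)
        _ = ‖z‖ ^ 2 * t := by ring
    · exact (continuous_const.mul continuous_id).intervalIntegrable 0 1
  have hval : (∫ t in (0:ℝ)..1, ‖z‖ ^ 2 * t) = ‖z‖ ^ 2 / 2 := by
    rw [intervalIntegral.integral_const_mul]
    simp [integral_id]
    ring
  calc ‖∫ t in (0:ℝ)..1, (z * Complex.exp ((t:ℂ) * z) - z)‖
      ≤ |∫ t in (0:ℝ)..1, ‖z‖ ^ 2 * t| := hbound
    _ = |‖z‖ ^ 2 / 2| := by rw [hval]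
    _ = ‖z‖ ^ 2 / 2 := abs_of_nonneg (by positivity)

theorem exp_quotient_lower_bound (w : ℂ) (hw0 : w ≠ 0) (hw : 0 ≤ w.re) :
    1 - ‖w‖ / 2 ≤ ‖(Complex.exp (-w) - 1) / w‖ := by
  have hre : (-w).re ≤ 0 := by simpa using hw
  have h1 : ‖Complex.exp (-w) - 1 - (-w)‖ ≤ ‖w‖ ^ 2 / 2 := by
    have := abs_exp_sub_one_sub_le' (-w) hre
    simpa using this
  have habs : (0:ℝ) < ‖w‖ := norm_pos_iff.mpr hw0
  have h2 : ‖w‖ - ‖w‖ ^ 2 / 2 ≤ ‖Complex.exp (-w) - 1‖ := by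
    have htri : ‖(-w : ℂ)‖ ≤ ‖Complex.exp (-w) - 1‖ + ‖Complex.exp (-w) - 1 - (-w)‖ := by
      have h := norm_sub_le (Complex.exp (-w) - 1) (Complex.exp (-w) - 1 - (-w))
      rw [show Complex.exp (-w) - 1 - (Complex.exp (-w) - 1 - (-w)) = -w from by ring] at h
      exact h
    have hnw : ‖(-w : ℂ)‖ = ‖w‖ := by simp
    rw [hnw] at htri
    linarith [h1, htri]
  rw [norm_div, le_div_iff₀ habs]
  calc (1 - ‖w‖ / 2) * ‖w‖
      = ‖w‖ - ‖w‖ ^ 2 / 2 := by ring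
    _ ≤ ‖Complex.exp (-w) - 1‖ := h2
end

section
/- Let μ be a nonnegative Borel measure on the closed right half-plane, 1 < p ≤ 2, p' = p/(p-1), and suppose there is a constant C such that ‖𝓛u‖_{L^{p'}((closed right half-plane), dμ)} ≤ C‖u‖_{L^p(0,∞)} for all u ∈ L^p(0,∞). Then μ is a Carleson measure: there is a constant N (one may take N = 2^{3/2} p' C^{p'}) such that μ(Q_{a,h}) ≤ N·h for all a ∈ ℝ and h > 0, where Q_{a,h} = {z : Im z ∈ [a,a+h], Re z ∈ [0,h]}. -/
open MeasureTheory Set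
open scoped ENNReal

lemma norm_one_sub_exp_neg_le (v : ℂ) (hv : 0 ≤ v.re) : ‖1 - Complex.exp (-v)‖ ≤ ‖v‖ := by
  have key : ∀ x ∈ Icc (0:ℝ) 1, HasDerivWithinAt (fun t : ℝ => Complex.exp (-(t:ℂ) * v))
      (Complex.exp (-(x:ℂ) * v) * (-v)) (Icc 0 1) x := by
    intro x _
    have h1 : HasDerivAt (fun t : ℝ => -(t:ℂ) * v) (-v) x := by
      have h0 : HasDerivAt (fun t : ℝ => (t:ℂ)) 1 x := Complex.ofRealCLM.hasDerivAt
      exact (h0.neg.mul_const v).congr_deriv (by ring)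
    exact (h1.cexp).hasDerivWithinAt
  have bound : ∀ x ∈ Icc (0:ℝ) 1, ‖Complex.exp (-(x:ℂ) * v) * (-v)‖ ≤ ‖v‖ := by
    intro x hx
    rw [norm_mul, norm_neg]
    have hle : ‖Complex.exp (-(x:ℂ) * v)‖ ≤ 1 := by
      rw [Complex.norm_exp]
      have : (-(x:ℂ) * v).re = -(x * v.re) := by simp
      rw [this]
      exact Real.exp_le_one_iff.2 (neg_nonpos.2 (mul_nonneg hx.1 hv))
    calc ‖Complex.exp (-(x:ℂ) * v)‖ * ‖v‖ ≤ 1 * ‖v‖ :=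
          mul_le_mul_of_nonneg_right hle (norm_nonneg _)
      _ = ‖v‖ := one_mul _
  have := (convex_Icc (0:ℝ) 1).norm_image_sub_le_of_norm_hasDerivWithin_le key bound
    (left_mem_Icc.2 zero_le_one) (right_mem_Icc.2 zero_le_one)
  simpa [norm_sub_rev] using this

lemma mul_log_le_carleson (p : ℝ) (hp : 1 < p) (hp2 : p ≤ 2) :
    p * Real.log p ≤ 2 * Real.log 2 * (p - 1) := by
  have hp0 : (0:ℝ) < p := by linarith
  have hlog : Real.log p ≤ p - 1 := Real.log_le_sub_one_of_pos hp0
  rcases le_or_gt p (2 * Real.log 2) with hc | hc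
  · nlinarith [Real.log_nonneg hp.le, Real.log_pos one_lt_two]
  · have h2 : Real.log (p / 2) ≤ p / 2 - 1 := Real.log_le_sub_one_of_pos (by linarith)
    have h3 : Real.log (p / 2) = Real.log p - Real.log 2 := by
      rw [Real.log_div (by linarith) (by norm_num)]
    nlinarith [Real.log_pos one_lt_two]

lemma rpow_conj_le_four (p p' : ℝ) (hp : 1 < p) (hp2 : p ≤ 2) (hp' : p' = p / (p - 1)) :
    p ^ p' ≤ 4 := by
  have hp0 : (0:ℝ) < p := by linarith
  have hp1 : (0:ℝ) < p - 1 := by linarith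
  have h1 : p' * Real.log p ≤ Real.log 4 := by
    have h4 : Real.log 4 = 2 * Real.log 2 := by
      rw [show (4:ℝ) = 2 ^ 2 by norm_num, Real.log_pow]; push_cast; ring
    rw [hp', h4, div_mul_eq_mul_div, div_le_iff₀ hp1]
    exact mul_log_le_carleson p hp hp2
  calc p ^ p' = Real.exp (p' * Real.log p) := by
        rw [Real.rpow_def_of_pos hp0, mul_comm]
    _ ≤ Real.exp (Real.log 4) := Real.exp_le_exp.2 h1
    _ = 4 := Real.exp_log (by norm_num)

set_option maxHeartbeats 2000000 in
theorem HY_implies_Carleson (μ : Measure ℂ) (p p' C : ℝ)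
    (hp : 1 < p) (hp2 : p ≤ 2) (hp' : p' = p / (p - 1)) (hC : 0 ≤ C)
    (hsupp : μ {z : ℂ | z.re < 0} = 0)
    (hHY : ∀ u : ℝ → ℂ, MemLp u (ENNReal.ofReal p) (volume.restrict (Ioi (0:ℝ))) →
      eLpNorm (fun z : ℂ => ∫ t in Ioi (0:ℝ), u t * Complex.exp (-z * t))
          (ENNReal.ofReal p') μ
        ≤ ENNReal.ofReal C * eLpNorm u (ENNReal.ofReal p) (volume.restrict (Ioi (0:ℝ)))) :
    ∀ a h : ℝ, 0 < h →
      μ {z : ℂ | z.im ∈ Icc a (a + h) ∧ z.re ∈ Icc 0 h}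
        ≤ ENNReal.ofReal (2 ^ ((3:ℝ)/2) * p' * C ^ p' * h) := by
  intro a h hh
  have hppos : (0:ℝ) < p := by linarith
  have hp1 : (0:ℝ) < p - 1 := by linarith
  have hp'pos : (0:ℝ) < p' := by rw [hp']; positivity
  have hsum : 1/p + 1/p' = 1 := by
    rw [hp']; field_simp; ring
  set s : ℝ := Real.sqrt 2 with hs
  have hspos : (0:ℝ) < s := Real.sqrt_pos.2 two_pos
  have hss : s * s = 2 := Real.mul_self_sqrt (by norm_num)
  set ε : ℝ := s / p' with hε
  have hεpos : 0 < ε := div_pos hspos hp'pos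
  set T : ℝ := ε / h with hT
  have hTpos : 0 < T := div_pos hεpos hh
  set c : ℝ := (h/ε) ^ (1/p) with hc
  have hcpos : 0 < c := Real.rpow_pos_of_pos (div_pos hh hεpos) _
  set u : ℝ → ℂ := (Ioc (0:ℝ) T).indicator
      (fun t => (c : ℂ) * Complex.exp (Complex.I * a * t)) with hu
  set Q : Set ℂ := {z : ℂ | z.im ∈ Icc a (a + h) ∧ z.re ∈ Icc 0 h} with hQ
  clear_value s ε T c u Q
  have hQm : MeasurableSet Q := by
    rw [hQ]
    exact (Complex.measurable_im measurableSet_Icc).inter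
      (Complex.measurable_re measurableSet_Icc)
  -- the Lp norm of u is 1
  have hcT1 : c * T ^ (1/p) = 1 := by
    rw [hc, ← Real.mul_rpow (div_pos hh hεpos).le hTpos.le]
    rw [hT, show h / ε * (ε / h) = 1 by field_simp]
    exact Real.one_rpow _
  have hsnorm : eLpNorm u (ENNReal.ofReal p) (volume.restrict (Ioi (0:ℝ))) = 1 := by
    have hnn : ∀ᵐ t ∂(volume.restrict (Ioi (0:ℝ))),
        ‖u t‖ = ‖(Ioc (0:ℝ) T).indicator (fun _ => (c:ℂ)) t‖ := by
      refine Filter.Eventually.of_forall fun t => ?_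
      by_cases ht : t ∈ Ioc (0:ℝ) T
      · rw [hu]
        rw [indicator_of_mem ht, indicator_of_mem ht, norm_mul]
        have : ‖Complex.exp (Complex.I * a * t)‖ = 1 := by
          rw [Complex.norm_exp]
          have : (Complex.I * a * t).re = 0 := by simp
          rw [this, Real.exp_zero]
        rw [this, mul_one]
      · rw [hu, indicator_of_notMem ht, indicator_of_notMem ht]
    rw [eLpNorm_congr_norm_ae hnn,
      eLpNorm_indicator_const measurableSet_Ioc
        (by simp [ENNReal.ofReal_eq_zero]; linarith) ENNReal.ofReal_ne_top,
      ENNReal.toReal_ofReal hppos.le,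
      Measure.restrict_apply measurableSet_Ioc,
      inter_eq_self_of_subset_left Ioc_subset_Ioi_self,
      Real.volume_Ioc, sub_zero]
    have h1 : ‖(c:ℂ)‖ₑ = ENNReal.ofReal c := by
      rw [← ofReal_norm_eq_enorm, Complex.norm_real, Real.norm_of_nonneg hcpos.le]
    rw [h1, ENNReal.ofReal_rpow_of_nonneg hTpos.le (by positivity),
      ← ENNReal.ofReal_mul hcpos.le, hcT1, ENNReal.ofReal_one]
  have hmem : MemLp u (ENNReal.ofReal p) (volume.restrict (Ioi (0:ℝ))) := by
    constructor
    · rw [hu]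
      refine (Measurable.indicator ?_ measurableSet_Ioc).aestronglyMeasurable
      exact (measurable_const.mul
        ((Complex.continuous_exp.comp (continuous_const.mul Complex.continuous_ofReal)).measurable))
    · rw [hsnorm]; exact ENNReal.one_lt_top
  -- key pointwise lower bound on Q
  have hcT : c * T = (ε/h) ^ (1/p') := by
    have hx : (0:ℝ) < ε / h := div_pos hεpos hh
    have : c = (ε/h) ^ (-(1/p)) := by
      rw [hc, Real.rpow_neg hx.le, ← Real.inv_rpow hx.le, inv_div]
    rw [this, hT]
    nth_rewrite 2 [show ε / h = (ε/h) ^ (1:ℝ) by rw [Real.rpow_one]]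
    rw [← Real.rpow_add hx]
    congr 1
    linarith [hsum]
  have key : ∀ z : ℂ, z ∈ Q →
      (ε/h) ^ (1/p') / p ≤ ‖∫ t in Ioi (0:ℝ), u t * Complex.exp (-z * t)‖ := by
    intro z hz
    rw [hQ] at hz
    obtain ⟨hzim, hzre⟩ := hz
    set w : ℂ := z - Complex.I * a with hw
    have hwre : w.re = z.re := by simp [hw]
    have hwim : w.im = z.im - a := by simp [hw]
    have heq : (fun t : ℝ => u t * Complex.exp (-z * t)) =
        (Ioc (0:ℝ) T).indicator (fun t : ℝ => (c:ℂ) * Complex.exp (-(w * t))) := by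
      funext t
      by_cases ht : t ∈ Ioc (0:ℝ) T
      · rw [hu]
        rw [indicator_of_mem ht, indicator_of_mem ht, mul_assoc, ← Complex.exp_add]
        congr 2
        rw [hw]; ring
      · rw [hu, indicator_of_notMem ht, indicator_of_notMem ht, zero_mul]
    rw [heq, integral_indicator measurableSet_Ioc, Measure.restrict_restrict measurableSet_Ioc,
      inter_eq_self_of_subset_left Ioc_subset_Ioi_self]
    have hcont : Continuous fun t : ℝ => (c:ℂ) * Complex.exp (-(w * t)) := by
      exact continuous_const.mul (Complex.continuous_exp.comp
        (continuous_const.mul Complex.continuous_ofReal).neg)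
    have hint1 : IntegrableOn (fun t : ℝ => (c:ℂ) * Complex.exp (-(w*t))) (Ioc 0 T) :=
      hcont.integrableOn_Ioc
    have hint2 : IntegrableOn (fun _ : ℝ => (c:ℂ)) (Ioc (0:ℝ) T) :=
      continuous_const.integrableOn_Ioc
    have hdecomp : ∫ t in Ioc (0:ℝ) T, (c:ℂ) * Complex.exp (-(w*t)) =
        (↑(c * T) : ℂ) - ∫ t in Ioc (0:ℝ) T, ((c:ℂ) - (c:ℂ) * Complex.exp (-(w*t))) := by
      rw [integral_sub hint2 hint1, integral_const,
        measureReal_restrict_apply_univ, Real.volume_real_Ioc_of_le hTpos.le, sub_zero,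
        Complex.real_smul, Complex.ofReal_mul]
      ring
    have hwle : ‖w‖ ≤ s * h := by
      have h1 : ‖w‖ = Real.sqrt (w.re * w.re + w.im * w.im) := by
        rw [Complex.norm_def, Complex.normSq_apply]
      have h2 : w.re * w.re + w.im * w.im ≤ 2 * h^2 := by
        rw [hwre, hwim]
        obtain ⟨h3, h4⟩ := hzre
        obtain ⟨h5, h6⟩ := hzim
        nlinarith
      have h7 : s * h = Real.sqrt (2 * h^2) := by
        rw [Real.sqrt_mul (by norm_num), Real.sqrt_sq hh.le, hs]
      rw [h1, h7]
      exact Real.sqrt_le_sqrt h2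
    have hRbound : ‖∫ t in Ioc (0:ℝ) T, ((c:ℂ) - (c:ℂ) * Complex.exp (-(w*t)))‖
        ≤ c * ‖w‖ * (T^2/2) := by
      have hb : ∀ᵐ (t : ℝ) ∂(volume.restrict (Ioc (0:ℝ) T)),
          ‖(c:ℂ) - (c:ℂ) * Complex.exp (-(w*t))‖ ≤ c * ‖w‖ * t := by
        rw [ae_restrict_iff' measurableSet_Ioc]
        refine Filter.Eventually.of_forall fun t ht => ?_
        have he : (c:ℂ) - (c:ℂ)*Complex.exp (-(w*t)) = c * (1 - Complex.exp (-(w*t))) := by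
          ring
        rw [he, norm_mul, Complex.norm_real, Real.norm_of_nonneg hcpos.le]
        have hre : (w * (t:ℂ)).re = w.re * t := by simp
        have hb1 := norm_one_sub_exp_neg_le (w * t)
          (by rw [hre]; exact mul_nonneg (hwre ▸ hzre.1) ht.1.le)
        calc c * ‖1 - Complex.exp (-(w*t))‖ ≤ c * ‖w * (t:ℂ)‖ :=
              mul_le_mul_of_nonneg_left hb1 hcpos.le
          _ = c * ‖w‖ * t := by
              rw [norm_mul, Complex.norm_real, Real.norm_of_nonneg ht.1.le, mul_assoc]
      have hgint : Integrable (fun t : ℝ => c * ‖w‖ * t) (volume.restrict (Ioc (0:ℝ) T)) :=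
        (continuous_const.mul continuous_id).integrableOn_Ioc
      have := norm_integral_le_of_norm_le hgint hb
      refine this.trans ?_
      rw [integral_const_mul]
      have : ∫ t in Ioc (0:ℝ) T, t = T^2/2 := by
        rw [← intervalIntegral.integral_of_le hTpos.le]
        simp [integral_id]
      rw [this]
    -- combine
    have hmain : c * T - c * ‖w‖ * (T^2/2) ≤ ‖∫ t in Ioc (0:ℝ) T, (c:ℂ) * Complex.exp (-(w*t))‖ := by
      rw [hdecomp]
      have h1 := norm_sub_norm_le (↑(c * T) : ℂ)
        (∫ t in Ioc (0:ℝ) T, ((c:ℂ) - (c:ℂ) * Complex.exp (-(w*t))))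
      have h2 : ‖(↑(c * T) : ℂ)‖ = c * T := by
        rw [Complex.norm_real, Real.norm_of_nonneg (by positivity)]
      linarith
    have hfinal : (ε/h) ^ (1/p') / p ≤ c * T - c * ‖w‖ * (T^2/2) := by
      have hb2 : c * ‖w‖ * (T^2/2) ≤ c * T / p' := by
        have h3 : c * ‖w‖ * (T^2/2) ≤ c * (s*h) * (T^2/2) := by
          have := mul_le_mul_of_nonneg_left hwle hcpos.le
          nlinarith [sq_nonneg T]
        refine h3.trans (le_of_eq ?_)
        have hTe : h * T = ε := by rw [hT]; field_simp
        have hsε : s * ε = 2 / p' := by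
          rw [hε, mul_div_assoc', hss]
        calc c * (s*h) * (T^2/2) = c * T * (s * (h*T)) / 2 := by ring
          _ = c * T * (s * ε) / 2 := by rw [hTe]
          _ = c * T * (2/p') / 2 := by rw [hsε]
          _ = c * T / p' := by field_simp
      have h1p : c * T - c * T / p' = c * T / p := by
        have h1m : (1:ℝ) - 1/p' = 1/p := by linarith [hsum]
        calc c*T - c*T/p' = c*T*(1 - 1/p') := by ring
          _ = c*T*(1/p) := by rw [h1m]
          _ = c*T/p := by ring
      rw [← hcT]
      linarith [hb2, h1p]
    linarith
  -- eLpNorm lower bound via indicator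
  set m : ℝ := (ε/h) ^ (1/p') / p with hm
  clear_value m
  have hmpos : 0 < m := by
    rw [hm]; positivity
  have hmono : eLpNorm (Q.indicator fun _ => (m:ℂ)) (ENNReal.ofReal p') μ ≤
      eLpNorm (fun z : ℂ => ∫ t in Ioi (0:ℝ), u t * Complex.exp (-z * t))
        (ENNReal.ofReal p') μ := by
    apply eLpNorm_mono
    intro z
    by_cases hz : z ∈ Q
    · rw [indicator_of_mem hz, Complex.norm_real, Real.norm_of_nonneg hmpos.le]
      exact key z hz
    · rw [indicator_of_notMem hz]; simp
  rw [eLpNorm_indicator_const hQm (by simp [ENNReal.ofReal_eq_zero]; linarith)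
    ENNReal.ofReal_ne_top, ENNReal.toReal_ofReal hp'pos.le] at hmono
  have hchain : ENNReal.ofReal m * μ Q ^ (1/p') ≤ ENNReal.ofReal C := by
    have h1 : ‖(m:ℂ)‖ₑ = ENNReal.ofReal m := by
      rw [← ofReal_norm_eq_enorm, Complex.norm_real, Real.norm_of_nonneg hmpos.le]
    calc ENNReal.ofReal m * μ Q ^ (1/p') = ‖(m:ℂ)‖ₑ * μ Q ^ (1/p') := by rw [h1]
      _ ≤ eLpNorm (fun z : ℂ => ∫ t in Ioi (0:ℝ), u t * Complex.exp (-z * t))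
          (ENNReal.ofReal p') μ := hmono
      _ ≤ ENNReal.ofReal C * eLpNorm u (ENNReal.ofReal p) (volume.restrict (Ioi (0:ℝ))) :=
          hHY u hmem
      _ = ENNReal.ofReal C := by rw [hsnorm, mul_one]
  -- extract bound on μ Q
  have h2 : μ Q ^ (1/p') ≤ ENNReal.ofReal (C / m) := by
    rw [ENNReal.ofReal_div_of_pos hmpos, ENNReal.le_div_iff_mul_le
      (Or.inl (by simp [ENNReal.ofReal_eq_zero]; linarith)) (Or.inl ENNReal.ofReal_ne_top)]
    rwa [mul_comm]
  have h3 : μ Q ≤ ENNReal.ofReal ((C/m) ^ p') := by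
    calc μ Q = (μ Q ^ (1/p')) ^ p' := by
          rw [← ENNReal.rpow_mul, one_div, inv_mul_cancel₀ (ne_of_gt hp'pos),
            ENNReal.rpow_one]
      _ ≤ (ENNReal.ofReal (C/m)) ^ p' := ENNReal.rpow_le_rpow h2 hp'pos.le
      _ = ENNReal.ofReal ((C/m) ^ p') :=
          ENNReal.ofReal_rpow_of_nonneg (div_nonneg hC hmpos.le) hp'pos.le
  refine h3.trans (ENNReal.ofReal_le_ofReal ?_)
  -- final real arithmetic
  have hmp' : m ^ p' = (ε/h) / p ^ p' := by
    rw [hm, Real.div_rpow (by positivity) hppos.le]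
    rw [← Real.rpow_mul (by positivity), one_div, inv_mul_cancel₀ (ne_of_gt hp'pos),
      Real.rpow_one]
  have hCm : (C/m) ^ p' = C ^ p' * p ^ p' * (h/ε) := by
    rw [Real.div_rpow hC hmpos.le, hmp']
    have hεh : (0:ℝ) < ε / h := div_pos hεpos hh
    field_simp
  rw [hCm]
  have hp4 : p ^ p' ≤ 4 := rpow_conj_le_four p p' hp hp2 hp'
  have hCp' : (0:ℝ) ≤ C ^ p' := Real.rpow_nonneg hC _
  have h23 : (2:ℝ) ^ ((3:ℝ)/2) = 2 * s := by
    rw [hs, Real.sqrt_eq_rpow]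
    rw [show (3:ℝ)/2 = 1 + 1/2 by norm_num, Real.rpow_add two_pos, Real.rpow_one]
  rw [h23]
  have hhe : h / ε = h * p' / s := by
    rw [hε]; field_simp
  rw [hhe]
  have h4s : (4:ℝ)/s = 2*s := by
    rw [eq_comm, eq_div_iff (ne_of_gt hspos)]
    nlinarith [hss]
  calc C ^ p' * p ^ p' * (h * p' / s) ≤ C ^ p' * 4 * (h * p' / s) :=
        mul_le_mul_of_nonneg_right (mul_le_mul_of_nonneg_left hp4 hCp') (by positivity)
    _ = (4/s) * (C ^ p' * (h * p')) := by ring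
    _ = (2*s) * (C ^ p' * (h * p')) := by rw [h4s]
    _ = 2 * s * p' * C ^ p' * h := by ring
end

section
/- Let μ be a nonnegative Borel measure on the upper half-plane with Carleson norm N(μ) = sup_{a,h} μ(R_{a,h})/h < ∞, where R_{a,h} = {x+iy : a < x < a+h, 0 < y < h}. Let f ∈ L^1(ℝ) and let g(x+iy) = ∫ P_y(x−t) f(t) dt be its Poisson extension. Then for every λ > 0, μ({z : |g(z)| > λ}) ≤ 10 N(μ) ‖f‖_{L^1} / λ. -/
open MeasureTheory Set Filter
open scoped ENNReal NNReal

private lemma poisson_antideriv {y : ℝ} (hy : 0 < y) (r : ℝ) :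
    HasDerivAt (fun r : ℝ => -(1 / Real.pi * y / (y ^ 2 + r ^ 2)))
      (2 / Real.pi * y * r / (y ^ 2 + r ^ 2) ^ 2) r := by
  have hπ : Real.pi ≠ 0 := Real.pi_ne_zero
  have hd : (0:ℝ) < y ^ 2 + r ^ 2 := by positivity
  have h1 : HasDerivAt (fun r : ℝ => y ^ 2 + r ^ 2) (2 * r) r := by
    simpa using (hasDerivAt_pow 2 r).const_add (y ^ 2)
  have h2 := ((hasDerivAt_const r (1 / Real.pi * y)).div h1 hd.ne').neg
  convert h2 using 1
  all_goals first | rfl | (field_simp; ring)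

private lemma poisson_tail {y : ℝ} (hy : 0 < y) {s : ℝ} (hs : 0 ≤ s) :
    IntegrableOn (fun r : ℝ => 2 / Real.pi * y * r / (y ^ 2 + r ^ 2) ^ 2) (Ioi s) volume ∧
      ∫ r in Ioi s, 2 / Real.pi * y * r / (y ^ 2 + r ^ 2) ^ 2
        = 1 / Real.pi * y / (y ^ 2 + s ^ 2) := by
  have hπ : 0 < Real.pi := Real.pi_pos
  have hderiv : ∀ r ∈ Ici s, HasDerivAt (fun r : ℝ => -(1 / Real.pi * y / (y ^ 2 + r ^ 2)))
      (2 / Real.pi * y * r / (y ^ 2 + r ^ 2) ^ 2) r := fun r _ => poisson_antideriv hy r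
  have hpos : ∀ r ∈ Ioi s, 0 ≤ 2 / Real.pi * y * r / (y ^ 2 + r ^ 2) ^ 2 := by
    intro r hr
    have h0 : 0 ≤ r := hs.trans (le_of_lt hr)
    have : 0 ≤ 2 / Real.pi * y * r := by positivity
    positivity
  have hlim : Tendsto (fun r : ℝ => -(1 / Real.pi * y / (y ^ 2 + r ^ 2))) atTop (nhds 0) := by
    have h0 : Tendsto (fun r : ℝ => y ^ 2 + r ^ 2) atTop atTop :=
      tendsto_atTop_add_const_left _ _ (tendsto_pow_atTop two_ne_zero)
    have h1 := (h0.inv_tendsto_atTop).const_mul (1 / Real.pi * y)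
    simp only [mul_zero] at h1
    simpa [div_eq_mul_inv] using h1.neg
  refine ⟨integrableOn_Ioi_deriv_of_nonneg' hderiv hpos hlim, ?_⟩
  rw [integral_Ioi_of_hasDerivAt_of_nonneg' hderiv hpos hlim]
  ring


private lemma poisson_antideriv2 {y : ℝ} (hy : 0 < y) (r : ℝ) :
    HasDerivAt (fun r : ℝ => 1 / Real.pi * (Real.arctan (r / y) - y * r / (y ^ 2 + r ^ 2)))
      (2 / Real.pi * y * r ^ 2 / (y ^ 2 + r ^ 2) ^ 2) r := by
  have hπ : Real.pi ≠ 0 := Real.pi_ne_zero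
  have hy' : y ≠ 0 := hy.ne'
  have hd : (0:ℝ) < y ^ 2 + r ^ 2 := by positivity
  have hsq : HasDerivAt (fun r : ℝ => y ^ 2 + r ^ 2) (2 * r) r := by
    simpa using (hasDerivAt_pow 2 r).const_add (y ^ 2)
  have h1 : HasDerivAt (fun r : ℝ => Real.arctan (r / y))
      (1 / (1 + (r / y) ^ 2) * (1 / y)) r := by
    have := (Real.hasDerivAt_arctan (r / y)).comp r ((hasDerivAt_id r).div_const y)
    exact this
  have h2 : HasDerivAt (fun r : ℝ => y * r / (y ^ 2 + r ^ 2))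
      ((y * (y ^ 2 + r ^ 2) - y * r * (2 * r)) / (y ^ 2 + r ^ 2) ^ 2) r := by
    have hm : HasDerivAt (fun r : ℝ => y * r) y r := by
      simpa using (hasDerivAt_id r).const_mul y
    exact hm.div hsq hd.ne'
  have h3 := (h1.sub h2).const_mul (1 / Real.pi)
  convert h3 using 1
  have h4 : (1:ℝ) + (r / y) ^ 2 ≠ 0 := by positivity
  all_goals first | rfl | (field_simp; ring)

private lemma poisson_tail2 {y : ℝ} (hy : 0 < y) :
    IntegrableOn (fun r : ℝ => 2 / Real.pi * y * r ^ 2 / (y ^ 2 + r ^ 2) ^ 2) (Ioi y) volume ∧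
      ∫ r in Ioi y, 2 / Real.pi * y * r ^ 2 / (y ^ 2 + r ^ 2) ^ 2
        = 1 / 4 + 1 / (2 * Real.pi) := by
  have hπ : 0 < Real.pi := Real.pi_pos
  have hy' : y ≠ 0 := hy.ne'
  have hderiv : ∀ r ∈ Ici y,
      HasDerivAt (fun r : ℝ => 1 / Real.pi * (Real.arctan (r / y) - y * r / (y ^ 2 + r ^ 2)))
        (2 / Real.pi * y * r ^ 2 / (y ^ 2 + r ^ 2) ^ 2) r := fun r _ => poisson_antideriv2 hy r
  have hpos : ∀ r ∈ Ioi y, 0 ≤ 2 / Real.pi * y * r ^ 2 / (y ^ 2 + r ^ 2) ^ 2 := by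
    intro r _
    positivity
  have hlim : Tendsto (fun r : ℝ => 1 / Real.pi * (Real.arctan (r / y) - y * r / (y ^ 2 + r ^ 2)))
      atTop (nhds (1 / Real.pi * (Real.pi / 2 - 0))) := by
    apply Tendsto.const_mul
    apply Tendsto.sub
    · exact (tendsto_nhds_of_tendsto_nhdsWithin Real.tendsto_arctan_atTop).comp
        (Tendsto.atTop_div_const hy tendsto_id)
    · have hb : Tendsto (fun r : ℝ => y / r) atTop (nhds 0) :=
        Filter.Tendsto.const_div_atTop tendsto_id y
      have e1 : ∀ᶠ r : ℝ in atTop, 0 ≤ y * r / (y ^ 2 + r ^ 2) := by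
        filter_upwards [Filter.eventually_ge_atTop (1:ℝ)] with r hr
        have h0 : (0:ℝ) ≤ r := le_trans zero_le_one hr
        positivity
      have e2 : ∀ᶠ r : ℝ in atTop, y * r / (y ^ 2 + r ^ 2) ≤ y / r := by
        filter_upwards [Filter.eventually_ge_atTop (1:ℝ)] with r hr
        have h0 : (0:ℝ) < r := lt_of_lt_of_le zero_lt_one hr
        rw [div_le_div_iff₀ (by positivity) h0]
        nlinarith [sq_nonneg y, sq_nonneg r]
      exact squeeze_zero' e1 e2 hb
  refine ⟨integrableOn_Ioi_deriv_of_nonneg' hderiv hpos hlim, ?_⟩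
  rw [integral_Ioi_of_hasDerivAt_of_nonneg' hderiv hpos hlim]
  rw [div_self hy', Real.arctan_one]
  have : y * y / (y ^ 2 + y ^ 2) = 1 / 2 := by
    rw [div_eq_iff (by positivity)]
    ring
  rw [this]
  field_simp
  ring

private lemma poisson_cont {y : ℝ} (hy : 0 < y) :
    Continuous (fun r : ℝ => 2 / Real.pi * y * r / (y ^ 2 + r ^ 2) ^ 2) := by
  apply Continuous.div (by fun_prop) (by fun_prop)
  intro r
  positivity

private lemma poisson_head {y : ℝ} (hy : 0 < y) :
    ∫ r in Ioc 0 y, 2 / Real.pi * y * r / (y ^ 2 + r ^ 2) ^ 2 = 1 / (2 * Real.pi * y) := by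
  have hπ : Real.pi ≠ 0 := Real.pi_ne_zero
  have hy' : y ≠ 0 := hy.ne'
  rw [← intervalIntegral.integral_of_le hy.le,
    intervalIntegral.integral_eq_sub_of_hasDerivAt (fun r _ => poisson_antideriv hy r)
      ((poisson_cont hy).intervalIntegrable 0 y)]
  norm_num
  field_simp
  ring

open Metric in
private lemma pointwise_bound {y x A : ℝ} (hy : 0 < y) (hA : 0 ≤ A)
    {h : ℝ → ℝ} (hmeas : Measurable h) (hint : Integrable h) (hnn : ∀ t, 0 ≤ h t)
    (hballs : ∀ r, y ≤ r → ∫ t in ball x r, h t ≤ 2 * A * r) :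
    ∫ t, 1 / Real.pi * y / (y ^ 2 + (x - t) ^ 2) * h t ≤ (2 / Real.pi + 1 / 2) * A := by
  have hπ : 0 < Real.pi := Real.pi_pos
  have hy' : y ≠ 0 := hy.ne'
  set q : ℝ → ℝ := fun r => 2 / Real.pi * y * r / (y ^ 2 + r ^ 2) ^ 2 with hq
  set K : ℝ → ℝ := fun t => 1 / Real.pi * y / (y ^ 2 + (x - t) ^ 2) with hK
  have hqnn : ∀ r : ℝ, 0 ≤ r → 0 ≤ q r := by
    intro r hr
    have : (0:ℝ) ≤ 2 / Real.pi * y * r := by positivity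
    rw [hq]
    positivity
  have hKpos : ∀ t, 0 ≤ K t := by intro t; rw [hK]; positivity
  have hKcont : Continuous K := by
    rw [hK]
    apply Continuous.div (by fun_prop) (by fun_prop)
    intro t; positivity
  have hKle : ∀ t, K t ≤ 1 / (Real.pi * y) := by
    intro t
    rw [hK]
    rw [div_le_div_iff₀ (by positivity) (by positivity)]
    have hid : 1 / Real.pi * y * (Real.pi * y) = y ^ 2 := by field_simp
    nlinarith [sq_nonneg (x - t)]
  have hKh : Integrable (fun t => K t * h t) := by
    apply Integrable.mono (hint.const_mul (1 / (Real.pi * y)))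
      ((hKcont.measurable.mul hmeas).aestronglyMeasurable)
    filter_upwards with t
    rw [Real.norm_eq_abs, Real.norm_eq_abs, Pi.mul_apply, abs_of_nonneg (mul_nonneg (hKpos t) (hnn t))]
    calc K t * h t ≤ 1 / (Real.pi * y) * h t := mul_le_mul_of_nonneg_right (hKle t) (hnn t)
      _ ≤ |1 / (Real.pi * y) * h t| := le_abs_self _
  rw [← ENNReal.ofReal_le_ofReal_iff (by positivity)]
  rw [ofReal_integral_eq_lintegral_ofReal hKh
    (Filter.Eventually.of_forall fun t => mul_nonneg (hKpos t) (hnn t))]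
  set Q : ℝ → ℝ≥0∞ := fun r => ENNReal.ofReal (q r) with hQdef
  set H : ℝ → ℝ≥0∞ := fun t => ENNReal.ofReal (h t) with hHdef
  have hQm : Measurable Q := ENNReal.measurable_ofReal.comp (poisson_cont hy).measurable
  have hHm : Measurable H := ENNReal.measurable_ofReal.comp hmeas
  set Φ : ℝ × ℝ → ℝ≥0∞ :=
    fun p => ({p : ℝ × ℝ | dist p.1 x < p.2}).indicator (fun p => Q p.2 * H p.1) p with hΦdef
  have hS0m : MeasurableSet {p : ℝ × ℝ | dist p.1 x < p.2} :=
    measurableSet_lt (by fun_prop) (by fun_prop)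
  have hΦm : Measurable Φ :=
    ((hQm.comp measurable_snd).mul (hHm.comp measurable_fst)).indicator hS0m
  -- Step 1: representation of the integrand
  have hrep : ∀ t, ENNReal.ofReal (K t * h t) = ∫⁻ r in Ioi (0:ℝ), Φ (t, r) := by
    intro t
    have hd : (0:ℝ) ≤ dist t x := dist_nonneg
    have htail := poisson_tail hy hd
    have hsq : dist t x ^ 2 = (x - t) ^ 2 := by
      rw [Real.dist_eq, sq_abs]; ring
    have e1 : ∀ r : ℝ, Φ (t, r) = (Ioi (dist t x)).indicator Q r * H t := by
      intro r
      by_cases hr : dist t x < r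
      · show ({p : ℝ × ℝ | dist p.1 x < p.2}).indicator (fun p => Q p.2 * H p.1) (t, r) = _
        rw [indicator_of_mem (show (t, r) ∈ {p : ℝ × ℝ | dist p.1 x < p.2} from hr),
          indicator_of_mem (show r ∈ Ioi (dist t x) from hr)]
      · show ({p : ℝ × ℝ | dist p.1 x < p.2}).indicator (fun p => Q p.2 * H p.1) (t, r) = _
        rw [indicator_of_notMem (show (t, r) ∉ {p : ℝ × ℝ | dist p.1 x < p.2} from hr),
          indicator_of_notMem (show r ∉ Ioi (dist t x) from hr), zero_mul]
    calc ENNReal.ofReal (K t * h t) = ENNReal.ofReal (K t) * H t := by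
          rw [ENNReal.ofReal_mul (hKpos t)]
      _ = (∫⁻ r in Ioi (dist t x), Q r) * H t := by
          congr 1
          rw [← ofReal_integral_eq_lintegral_ofReal htail.1
            ((ae_restrict_iff' measurableSet_Ioi).2 (Filter.Eventually.of_forall
              fun r hr => hqnn r (hd.trans (le_of_lt hr)))), htail.2, hK]
          congr 1
          rw [hsq]
      _ = (∫⁻ r in Ioi (0:ℝ), (Ioi (dist t x)).indicator Q r) * H t := by
          rw [lintegral_indicator measurableSet_Ioi, Measure.restrict_restrict measurableSet_Ioi,
            inter_eq_left.2 (Ioi_subset_Ioi hd)]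
      _ = ∫⁻ r in Ioi (0:ℝ), (Ioi (dist t x)).indicator Q r * H t := by
          rw [lintegral_mul_const _ (hQm.indicator measurableSet_Ioi)]
      _ = ∫⁻ r in Ioi (0:ℝ), Φ (t, r) := by
          apply lintegral_congr
          intro r
          rw [e1 r]
  rw [lintegral_congr hrep]
  -- Step 2: Tonelli
  have hswap : ∫⁻ t, ∫⁻ r in Ioi (0:ℝ), Φ (t, r) ∂volume
      = ∫⁻ r in Ioi (0:ℝ), ∫⁻ t, Φ (t, r) ∂volume := by
    exact lintegral_lintegral_swap hΦm.aemeasurable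
  rw [hswap]
  -- Step 3: inner integral
  have hinner : ∀ r : ℝ, ∫⁻ t, Φ (t, r) ∂volume = Q r * ∫⁻ t in ball x r, H t := by
    intro r
    have e2 : (fun t => Φ (t, r)) = (ball x r).indicator (fun t => Q r * H t) := by
      funext t
      by_cases ht : dist t x < r
      · show ({p : ℝ × ℝ | dist p.1 x < p.2}).indicator (fun p => Q p.2 * H p.1) (t, r) = _
        rw [indicator_of_mem (show (t, r) ∈ {p : ℝ × ℝ | dist p.1 x < p.2} from ht),
          indicator_of_mem (mem_ball.2 ht)]
      · show ({p : ℝ × ℝ | dist p.1 x < p.2}).indicator (fun p => Q p.2 * H p.1) (t, r) = _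
        rw [indicator_of_notMem (show (t, r) ∉ {p : ℝ × ℝ | dist p.1 x < p.2} from ht),
          indicator_of_notMem (fun hc => ht (mem_ball.1 hc))]
    rw [show (∫⁻ t, Φ (t, r) ∂volume) = ∫⁻ t, (ball x r).indicator (fun t => Q r * H t) t ∂volume
        from by rw [← e2],
      lintegral_indicator measurableSet_ball, lintegral_const_mul _ hHm]
  rw [lintegral_congr hinner]
  -- Step 4: split and bound
  have hsplit : Ioc (0:ℝ) y ∪ Ioi y = Ioi 0 := Ioc_union_Ioi_eq_Ioi hy.le
  rw [← hsplit, lintegral_union measurableSet_Ioi (Ioc_disjoint_Ioi le_rfl)]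
  have hIb : ∀ r : ℝ, 0 < r → y ≤ r →
      (∫⁻ t in ball x r, H t) ≤ ENNReal.ofReal (2 * A * r) := by
    intro r _ hyr
    rw [← ofReal_integral_eq_lintegral_ofReal hint.integrableOn
      (Filter.Eventually.of_forall fun t => hnn t)]
    exact ENNReal.ofReal_le_ofReal (hballs r hyr)
  have hb1 : ∫⁻ r in Ioc (0:ℝ) y, Q r * ∫⁻ t in ball x r, H t
      ≤ ENNReal.ofReal (A / Real.pi) := by
    have hmono : ∀ r ∈ Ioc (0:ℝ) y, Q r * (∫⁻ t in ball x r, H t)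
        ≤ ENNReal.ofReal (q r * (2 * A * y)) := by
      intro r hr
      have h1 : (∫⁻ t in ball x r, H t) ≤ ENNReal.ofReal (2 * A * y) := by
        refine le_trans ?_ (hIb y hy le_rfl)
        exact lintegral_mono' (Measure.restrict_mono (ball_subset_ball hr.2) le_rfl) le_rfl
      calc Q r * (∫⁻ t in ball x r, H t) ≤ Q r * ENNReal.ofReal (2 * A * y) :=
            mul_le_mul_right h1 _
        _ = ENNReal.ofReal (q r * (2 * A * y)) := (ENNReal.ofReal_mul (hqnn r hr.1.le)).symm
    calc ∫⁻ r in Ioc (0:ℝ) y, Q r * ∫⁻ t in ball x r, H t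
        ≤ ∫⁻ r in Ioc (0:ℝ) y, ENNReal.ofReal (q r * (2 * A * y)) :=
          setLIntegral_mono (by fun_prop) hmono
      _ = ENNReal.ofReal (∫ r in Ioc (0:ℝ) y, q r * (2 * A * y)) := by
          rw [ofReal_integral_eq_lintegral_ofReal (f := fun r => q r * (2 * A * y))
            (((poisson_cont hy).mul continuous_const).integrableOn_Ioc)
            ((ae_restrict_iff' measurableSet_Ioc).2 (Filter.Eventually.of_forall
              fun r hr => mul_nonneg (hqnn r hr.1.le) (by positivity)))]
      _ = ENNReal.ofReal (A / Real.pi) := by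
          rw [MeasureTheory.integral_mul_const, poisson_head hy]
          congr 1
          field_simp
  have hb2 : ∫⁻ r in Ioi y, Q r * ∫⁻ t in ball x r, H t
      ≤ ENNReal.ofReal (A / 2 + A / Real.pi) := by
    have hmono : ∀ r ∈ Ioi y, Q r * (∫⁻ t in ball x r, H t)
        ≤ ENNReal.ofReal (q r * (2 * A * r)) := by
      intro r hr
      have hry : y < r := hr
      calc Q r * (∫⁻ t in ball x r, H t)
          ≤ Q r * ENNReal.ofReal (2 * A * r) :=
            mul_le_mul_right (hIb r (hy.trans hry) hry.le) _
        _ = ENNReal.ofReal (q r * (2 * A * r)) :=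
            (ENNReal.ofReal_mul (hqnn r (hy.trans hry).le)).symm
    have heq : ∀ r : ℝ, q r * (2 * A * r) = 2 * A * (2 / Real.pi * y * r ^ 2 / (y ^ 2 + r ^ 2) ^ 2) := by
      intro r
      rw [hq]
      ring
    have htail2 := poisson_tail2 hy
    calc ∫⁻ r in Ioi y, Q r * ∫⁻ t in ball x r, H t
        ≤ ∫⁻ r in Ioi y, ENNReal.ofReal (q r * (2 * A * r)) :=
          setLIntegral_mono (by fun_prop) hmono
      _ = ENNReal.ofReal (∫ r in Ioi y, q r * (2 * A * r)) := by
          rw [ofReal_integral_eq_lintegral_ofReal]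
          · apply (IntegrableOn.congr_fun (htail2.1.const_mul (2 * A)) ?_ measurableSet_Ioi)
            intro r _
            exact (heq r).symm
          · refine (ae_restrict_iff' measurableSet_Ioi).2 (Filter.Eventually.of_forall
              fun r hr => mul_nonneg (hqnn r ?_)
                (mul_nonneg (by positivity) ((hy.trans hr).le)))
            exact (hy.trans hr).le
      _ = ENNReal.ofReal (A / 2 + A / Real.pi) := by
          congr 1
          rw [show (fun r => q r * (2 * A * r))
              = fun r => 2 * A * (2 / Real.pi * y * r ^ 2 / (y ^ 2 + r ^ 2) ^ 2) from funext heq,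
            MeasureTheory.integral_const_mul, htail2.2]
          field_simp
          ring
  calc (∫⁻ r in Ioc (0:ℝ) y, Q r * ∫⁻ t in ball x r, H t)
      + ∫⁻ r in Ioi y, Q r * ∫⁻ t in ball x r, H t
      ≤ ENNReal.ofReal (A / Real.pi) + ENNReal.ofReal (A / 2 + A / Real.pi) :=
        add_le_add hb1 hb2
    _ = ENNReal.ofReal (A / Real.pi + (A / 2 + A / Real.pi)) :=
        (ENNReal.ofReal_add (by positivity) (by positivity)).symm
    _ ≤ ENNReal.ofReal ((2 / Real.pi + 1 / 2) * A) := by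
        apply ENNReal.ofReal_le_ofReal
        apply le_of_eq
        field_simp
        ring

set_option maxHeartbeats 1000000 in
theorem carleson_weak_L1 (μ : Measure ℂ) (N : ℝ) (hN : 0 ≤ N)
    (hsupp : μ {z : ℂ | z.im ≤ 0} = 0)
    (hCar : ∀ a h : ℝ, 0 < h →
      μ {z : ℂ | z.re ∈ Ioo a (a + h) ∧ z.im ∈ Ioo 0 h} ≤ ENNReal.ofReal (N * h))
    (f : ℝ → ℂ) (hf : Integrable f)
    (g : ℂ → ℂ)
    (hg : ∀ z : ℂ, 0 < z.im →
      g z = ∫ t : ℝ, ((1 / Real.pi) * z.im / (z.im ^ 2 + (z.re - t) ^ 2) : ℝ) • f t)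
    (lam : ℝ) (hlam : 0 < lam) :
    μ {z : ℂ | 0 < z.im ∧ lam < ‖g z‖}
      ≤ ENNReal.ofReal (10 * N * (∫ t : ℝ, ‖f t‖) / lam) := by
  classical
  have hπ : 0 < Real.pi := Real.pi_pos
  set Cst : ℝ := 2 / Real.pi + 1 / 2 with hCst
  have hCpos : 0 < Cst := by positivity
  have hCle : Cst ≤ 2 := by
    have h3 : (3:ℝ) < Real.pi := Real.pi_gt_three
    have h4 : 2 / Real.pi ≤ 2 / 3 := by
      rw [div_le_div_iff₀ (by linarith) (by norm_num)]
      nlinarith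
    rw [hCst]
    linarith
  -- measurable representative of ‖f‖
  set h : ℝ → ℝ := fun t => ‖hf.1.mk f t‖ with hhdef
  have hmeas : Measurable h := hf.1.stronglyMeasurable_mk.measurable.norm
  have hae : (fun t => ‖f t‖) =ᵐ[volume] h := hf.1.ae_eq_mk.mono fun t ht => by
    rw [hhdef]; simp [ht]
  have hint : Integrable h := (hf.norm.congr hae)
  have hnn : ∀ t, 0 ≤ h t := fun t => norm_nonneg _
  have hI : ∫ t, ‖f t‖ = ∫ t, h t := integral_congr_ae hae
  have hItot : 0 ≤ ∫ t, h t := integral_nonneg hnn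
  set S : Set ℂ := {z : ℂ | 0 < z.im ∧ lam < ‖g z‖} with hSdef
  -- Step 1: for each z in S there is a radius r > im z with large mass
  have key : ∀ z ∈ S, ∃ r, z.im < r ∧
      2 * (lam / Cst) * r < ∫ t in Metric.ball z.re r, h t := by
    intro z hz
    obtain ⟨hz1, hz2⟩ := hz
    have key0 : ∃ r, z.im ≤ r ∧ 2 * (lam / Cst) * r < ∫ t in Metric.ball z.re r, h t := by
      by_contra hcon
      push_neg at hcon
      have h1 : ‖g z‖ ≤ ∫ t, 1 / Real.pi * z.im / (z.im ^ 2 + (z.re - t) ^ 2) * h t := by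
        rw [hg z hz1]
        refine (norm_integral_le_integral_norm _).trans (le_of_eq ?_)
        apply integral_congr_ae
        filter_upwards [hae] with t ht
        rw [norm_smul, Real.norm_eq_abs, abs_of_nonneg (by positivity), ht]
      have hb := pointwise_bound hz1 (le_of_lt (div_pos hlam hCpos)) hmeas hint hnn hcon
      have hcc : (2 / Real.pi + 1 / 2) * (lam / Cst) = lam := by
        rw [hCst]; field_simp
      rw [hcc] at hb
      linarith
    obtain ⟨r, hr1, hr2⟩ := key0
    have hA : 0 < 2 * (lam / Cst) := by positivity
    set I := ∫ t in Metric.ball z.re r, h t with hIdef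
    have hrI : r < I / (2 * (lam / Cst)) := by
      rw [lt_div_iff₀ hA]
      linarith [hr2]
    refine ⟨(r + I / (2 * (lam / Cst))) / 2, by linarith, ?_⟩
    have h2 : I ≤ ∫ t in Metric.ball z.re ((r + I / (2 * (lam / Cst))) / 2), h t := by
      apply setIntegral_mono_set hint.integrableOn
        (Filter.Eventually.of_forall fun t => hnn t)
      exact HasSubset.Subset.eventuallyLE (Metric.ball_subset_ball (by linarith))
    calc 2 * (lam / Cst) * ((r + I / (2 * (lam / Cst))) / 2)
        < 2 * (lam / Cst) * (I / (2 * (lam / Cst))) := by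
          apply mul_lt_mul_of_pos_left _ hA
          linarith
      _ = I := by field_simp
      _ ≤ _ := h2
  choose! ρ hρ1 hρ2 using key
  -- Step 2: Vitali covering
  have hρpos : ∀ z ∈ S, 0 < ρ z := fun z hz => lt_trans hz.1 (hρ1 z hz)
  have hρle : ∀ z ∈ S, ρ z ≤ Cst / (2 * lam) * ∫ t, h t := by
    intro z hz
    have h1 := hρ2 z hz
    have h2 : ∫ t in Metric.ball z.re (ρ z), h t ≤ ∫ t, h t :=
      setIntegral_le_integral hint (Filter.Eventually.of_forall fun t => hnn t)
    have h3 : 2 * (lam / Cst) * ρ z ≤ ∫ t, h t := le_trans (le_of_lt h1) h2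
    have e : ρ z = Cst / (2 * lam) * (2 * (lam / Cst) * ρ z) := by
      field_simp
    calc ρ z = Cst / (2 * lam) * (2 * (lam / Cst) * ρ z) := e
      _ ≤ Cst / (2 * lam) * ∫ t, h t :=
        mul_le_mul_of_nonneg_left h3 (by positivity)
  obtain ⟨u, huS, hud, hcov⟩ := Vitali.exists_disjoint_subfamily_covering_enlargement
    (fun z : ℂ => Metric.ball z.re (ρ z)) S ρ 2 (by norm_num)
    (fun z hz => (hρpos z hz).le) (Cst / (2 * lam) * ∫ t, h t) hρle
    (fun z hz => ⟨z.re, Metric.mem_ball_self (hρpos z hz)⟩)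
  have hucnt : u.Countable := by
    apply Set.PairwiseDisjoint.countable_of_isOpen hud
      (fun z _ => Metric.isOpen_ball)
      (fun z hz => ⟨z.re, Metric.mem_ball_self (hρpos z (huS hz))⟩)
  -- Step 3: covering S by Carleson boxes
  set off : Fin 5 → ℝ := ![-3, -2, -1, 0, 1] with hoff
  set Rect : ℂ → Fin 5 → Set ℂ := fun b i =>
    {z : ℂ | z.re ∈ Ioo (b.re + off i * ρ b) (b.re + off i * ρ b + 2 * ρ b)
      ∧ z.im ∈ Ioo 0 (2 * ρ b)} with hRect
  have hcover : S ⊆ ⋃ b ∈ u, ⋃ i : Fin 5, Rect b i := by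
    intro z hz
    obtain ⟨b, hbu, hmeet, hδ⟩ := hcov z hz
    have hbS : b ∈ S := huS hbu
    have hρb : 0 < ρ b := hρpos b hbS
    obtain ⟨w, hw1, hw2⟩ := hmeet
    rw [Metric.mem_ball] at hw1 hw2
    have hre : |z.re - b.re| < 3 * ρ b := by
      have := abs_sub_abs_le_abs_sub (z.re - b.re) (w - b.re)
      have h1 : |z.re - w| < ρ z := by
        rw [← Real.dist_eq, dist_comm]; exact hw1
      have h2 : |w - b.re| < ρ b := hw2
      have h3 : |z.re - b.re| ≤ |z.re - w| + |w - b.re| := by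
        have := abs_sub_le (z.re) w (b.re); simpa using this
      linarith
    have him : z.im ∈ Ioo 0 (2 * ρ b) :=
      ⟨hz.1, lt_of_lt_of_le (hρ1 z hz) hδ⟩
    rw [abs_lt] at hre
    simp only [mem_iUnion]
    refine ⟨b, hbu, ?_⟩
    have hmem : ∀ i : Fin 5, b.re + off i * ρ b < z.re →
        z.re < b.re + off i * ρ b + 2 * ρ b → z ∈ Rect b i :=
      fun i hlo hhi => ⟨⟨hlo, hhi⟩, him⟩
    rcases lt_or_ge z.re (b.re - ρ b) with h1 | h1
    · refine ⟨0, hmem 0 ?_ ?_⟩ <;> rw [show off 0 = -3 from rfl] <;> nlinarith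
    rcases lt_or_ge z.re b.re with h2 | h2
    · refine ⟨1, hmem 1 ?_ ?_⟩ <;> rw [show off 1 = -2 from rfl] <;> nlinarith
    rcases lt_or_ge z.re (b.re + ρ b) with h3 | h3
    · refine ⟨2, hmem 2 ?_ ?_⟩ <;> rw [show off 2 = -1 from rfl] <;> nlinarith
    rcases lt_or_ge z.re (b.re + 2 * ρ b) with h4 | h4
    · refine ⟨3, hmem 3 ?_ ?_⟩ <;> rw [show off 3 = 0 from rfl] <;> nlinarith
    · refine ⟨4, hmem 4 ?_ ?_⟩ <;> rw [show off 4 = 1 from rfl] <;> nlinarith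
  -- Step 4: measure estimate
  have hbox : ∀ b ∈ u, μ (⋃ i : Fin 5, Rect b i) ≤ ENNReal.ofReal (10 * N * ρ b) := by
    intro b hbu
    have hρb : 0 < ρ b := hρpos b (huS hbu)
    calc μ (⋃ i : Fin 5, Rect b i) ≤ ∑' i : Fin 5, μ (Rect b i) := measure_iUnion_le _
      _ ≤ ∑' _ : Fin 5, ENNReal.ofReal (N * (2 * ρ b)) := by
          apply ENNReal.tsum_le_tsum
          intro i
          have := hCar (b.re + off i * ρ b) (2 * ρ b) (by positivity)
          exact this
      _ = 5 * ENNReal.ofReal (N * (2 * ρ b)) := by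
          rw [tsum_fintype]
          simp [Finset.sum_const, Finset.card_univ]
      _ = ENNReal.ofReal (10 * N * ρ b) := by
          rw [show (5 : ℝ≥0∞) = ENNReal.ofReal 5 by simp,
            ← ENNReal.ofReal_mul (by norm_num)]
          congr 1
          ring
  have hsum : ∑' b : u, ENNReal.ofReal (ρ b) ≤
      ENNReal.ofReal (Cst / (2 * lam)) * ENNReal.ofReal (∫ t, h t) := by
    have h1 : ∀ b : u, ENNReal.ofReal (ρ b) ≤ ENNReal.ofReal (Cst / (2 * lam)) *
        ∫⁻ t in Metric.ball (b : ℂ).re (ρ b), ENNReal.ofReal (h t) := by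
      intro b
      have hbS : (b : ℂ) ∈ S := huS b.2
      have hb := hρ2 b hbS
      have hρb : 0 < ρ (b : ℂ) := hρpos _ hbS
      have h2 : ρ (b : ℂ) ≤ Cst / (2 * lam) * ∫ t in Metric.ball (b : ℂ).re (ρ b), h t := by
        have e : ρ (b : ℂ) = Cst / (2 * lam) * (2 * (lam / Cst) * ρ (b : ℂ)) := by
          field_simp
        calc ρ (b : ℂ) = Cst / (2 * lam) * (2 * (lam / Cst) * ρ (b : ℂ)) := e
          _ ≤ Cst / (2 * lam) * ∫ t in Metric.ball (b : ℂ).re (ρ b), h t :=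
            mul_le_mul_of_nonneg_left (le_of_lt hb) (by positivity)
      calc ENNReal.ofReal (ρ b) ≤
          ENNReal.ofReal (Cst / (2 * lam) * ∫ t in Metric.ball (b : ℂ).re (ρ b), h t) :=
            ENNReal.ofReal_le_ofReal h2
        _ = ENNReal.ofReal (Cst / (2 * lam)) *
            ENNReal.ofReal (∫ t in Metric.ball (b : ℂ).re (ρ b), h t) :=
            ENNReal.ofReal_mul (by positivity)
        _ = ENNReal.ofReal (Cst / (2 * lam)) *
            ∫⁻ t in Metric.ball (b : ℂ).re (ρ b), ENNReal.ofReal (h t) := by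
            rw [ofReal_integral_eq_lintegral_ofReal hint.integrableOn
              (Filter.Eventually.of_forall fun t => hnn t)]
    calc ∑' b : u, ENNReal.ofReal (ρ b)
        ≤ ∑' b : u, ENNReal.ofReal (Cst / (2 * lam)) *
            ∫⁻ t in Metric.ball (b : ℂ).re (ρ b), ENNReal.ofReal (h t) :=
          ENNReal.tsum_le_tsum h1
      _ = ENNReal.ofReal (Cst / (2 * lam)) *
            ∑' b : u, ∫⁻ t in Metric.ball (b : ℂ).re (ρ b), ENNReal.ofReal (h t) :=
          ENNReal.tsum_mul_left
      _ = ENNReal.ofReal (Cst / (2 * lam)) *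
            ∫⁻ t in ⋃ b : u, Metric.ball (b : ℂ).re (ρ b), ENNReal.ofReal (h t) := by
          have : Countable u := hucnt.to_subtype
          rw [← lintegral_iUnion (fun b : u => measurableSet_ball)
            (fun i j hij => hud i.2 j.2 (Subtype.coe_injective.ne hij))]
      _ ≤ ENNReal.ofReal (Cst / (2 * lam)) * ∫⁻ t, ENNReal.ofReal (h t) := by
          apply mul_le_mul_right
          exact lintegral_mono' Measure.restrict_le_self le_rfl
      _ = ENNReal.ofReal (Cst / (2 * lam)) * ENNReal.ofReal (∫ t, h t) := by
          rw [ofReal_integral_eq_lintegral_ofReal hint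
            (Filter.Eventually.of_forall fun t => hnn t)]
  calc μ S ≤ μ (⋃ b ∈ u, ⋃ i : Fin 5, Rect b i) := measure_mono hcover
    _ ≤ ∑' b : u, μ (⋃ i : Fin 5, Rect (b : ℂ) i) := measure_biUnion_le μ hucnt _
    _ ≤ ∑' b : u, ENNReal.ofReal (10 * N * ρ b) :=
        ENNReal.tsum_le_tsum (fun b => hbox b b.2)
    _ = ENNReal.ofReal (10 * N) * ∑' b : u, ENNReal.ofReal (ρ b) := by
        rw [← ENNReal.tsum_mul_left]
        congr 1
        funext b
        rw [← ENNReal.ofReal_mul (by positivity)]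
    _ ≤ ENNReal.ofReal (10 * N) *
        (ENNReal.ofReal (Cst / (2 * lam)) * ENNReal.ofReal (∫ t, h t)) :=
        mul_le_mul_right hsum _
    _ = ENNReal.ofReal (10 * N * (Cst / (2 * lam)) * ∫ t, h t) := by
        rw [← ENNReal.ofReal_mul (by positivity), ← ENNReal.ofReal_mul (by positivity)]
        congr 1
        ring
    _ ≤ ENNReal.ofReal (10 * N * (∫ t : ℝ, ‖f t‖) / lam) := by
        apply ENNReal.ofReal_le_ofReal
        rw [hI]
        have hfrac : Cst / (2 * lam) ≤ 1 / lam := by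
          rw [div_le_div_iff₀ (by positivity) hlam]
          nlinarith
        calc 10 * N * (Cst / (2 * lam)) * ∫ t, h t
            ≤ 10 * N * (1 / lam) * ∫ t, h t := by
              apply mul_le_mul_of_nonneg_right _ hItot
              apply mul_le_mul_of_nonneg_left hfrac (by positivity)
          _ = 10 * N * (∫ t, h t) / lam := by ring
end
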